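/- arXiv:2412.05878 — 5 statements merged into one kernel-verified Lean document; each statement's English description precedes it below -/
import Mathlib

section
/- Let L be a bounded linear operator from Hilbert space 𝓗 to Hilbert space H and d ∈ H. Then L*d ∈ R(L*L) if and only if d admits a decomposition d = g + h with g ∈ R(L) and h ∈ R(L)^⊥. -/
theorem stmt8 {𝓗 H : Type*} [NormedAddCommGroup 𝓗] [InnerProductSpace ℂ 𝓗]
    [CompleteSpace 𝓗] [NormedAddCommGroup H] [InnerProductSpace ℂ H] [CompleteSpace H]
    (L : 𝓗 →L[ℂ] H) (d : H) :
    ContinuousLinearMap.adjoint L d ∈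
        LinearMap.range ((ContinuousLinearMap.adjoint L).comp L : 𝓗 →ₗ[ℂ] 𝓗) ↔
      ∃ g h : H, g ∈ LinearMap.range (L : 𝓗 →ₗ[ℂ] H) ∧ h ∈ (LinearMap.range (L : 𝓗 →ₗ[ℂ] H))ᗮ ∧ d = g + h := by
  constructor
  · rintro ⟨x, hx⟩
    refine ⟨L x, d - L x, ⟨x, rfl⟩, ?_, by abel⟩
    rintro y ⟨z, rfl⟩
    rw [ContinuousLinearMap.coe_coe, ← ContinuousLinearMap.adjoint_inner_right, map_sub]
    have hx' : ContinuousLinearMap.adjoint L (L x) = ContinuousLinearMap.adjoint L d := hx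
    rw [hx', sub_self, inner_zero_right]
  · rintro ⟨g, h, ⟨x, rfl⟩, hh, rfl⟩
    refine ⟨x, ?_⟩
    have hLh : ContinuousLinearMap.adjoint L h = 0 := by
      apply ext_inner_left ℂ
      intro y
      rw [inner_zero_right, ContinuousLinearMap.adjoint_inner_right]
      exact hh (L y) ⟨y, rfl⟩
    show ContinuousLinearMap.adjoint L (L x) = _
    rw [map_add, hLh, add_zero, ContinuousLinearMap.coe_coe]
end

section
/- Let L be a bounded linear operator from Hilbert space 𝓗 to H and d ∈ H. If the set of least square solutions S = {f : ‖Lf − d‖ = inf_g ‖Lg − d‖} is nonempty, and f̃ ∈ S, then the orthogonal projection of f̃ onto N(L)^⊥ also belongs to S and has norm less than or equal to the norm of every element of S. -/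
theorem stmt9 {𝓗 H : Type*} [NormedAddCommGroup 𝓗] [InnerProductSpace ℂ 𝓗]
    [CompleteSpace 𝓗] [NormedAddCommGroup H] [InnerProductSpace ℂ H] [CompleteSpace H]
    (L : 𝓗 →L[ℂ] H) (d : H) (ftilde : 𝓗)
    (hS : ftilde ∈ {f : 𝓗 | ∀ g : 𝓗, ‖L f - d‖ ≤ ‖L g - d‖}) :
    ∀ p : 𝓗, p ∈ (LinearMap.ker (L : 𝓗 →ₗ[ℂ] H))ᗮ → ftilde - p ∈ LinearMap.ker (L : 𝓗 →ₗ[ℂ] H) →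
      p ∈ {f : 𝓗 | ∀ g : 𝓗, ‖L f - d‖ ≤ ‖L g - d‖} ∧
        ∀ f ∈ {f : 𝓗 | ∀ g : 𝓗, ‖L f - d‖ ≤ ‖L g - d‖}, ‖p‖ ≤ ‖f‖ := by
  intro p hp hker
  have hLp : L p = L ftilde := by
    have h0 : L ftilde - L p = 0 := by
      rw [← map_sub]; exact hker
    exact (sub_eq_zero.mp h0).symm
  have hpS : p ∈ {f : 𝓗 | ∀ g : 𝓗, ‖L f - d‖ ≤ ‖L g - d‖} := by
    intro g; rw [hLp]; exact hS g
  refine ⟨hpS, ?_⟩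
  intro f hf
  -- f and ftilde are both minimizers, so L f = L ftilde (strict convexity)
  have hLf : L f = L ftilde := by
    set a : H := L f - d with ha
    set b : H := L ftilde - d with hb
    have hab : ‖a‖ = ‖b‖ := le_antisymm (hf ftilde) (hS f)
    have hmid : ‖b‖ ≤ ‖(2:ℂ)⁻¹ • (a + b)‖ := by
      have : L ((2:ℂ)⁻¹ • (f + ftilde)) - d = (2:ℂ)⁻¹ • (a + b) := by
        simp only [map_smul, map_add, ha, hb]
        module
      calc ‖b‖ ≤ ‖L ((2:ℂ)⁻¹ • (f + ftilde)) - d‖ := hS _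
        _ = ‖(2:ℂ)⁻¹ • (a + b)‖ := by rw [this]
    have hsub : ‖a - b‖ ^ 2 = 0 := by
      have hpar := parallelogram_law_with_norm ℂ a b
      have h1 : ‖(2:ℂ)⁻¹ • (a + b)‖ = 2⁻¹ * ‖a + b‖ := by
        rw [norm_smul]; norm_num
      nlinarith [norm_nonneg (a - b), norm_nonneg (a + b), norm_nonneg b, hmid, hab,
        h1 ▸ hmid]
    have : a - b = 0 := by
      have := pow_eq_zero_iff (n := 2) (by norm_num) |>.mp hsub
      simpa using this
    have : a = b := sub_eq_zero.mp this
    simpa [ha, hb, sub_left_inj] using this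
  -- hence f - p ∈ ker L, and Pythagoras
  have hfp : f - p ∈ LinearMap.ker (L : 𝓗 →ₗ[ℂ] H) := by
    simp only [LinearMap.mem_ker, ContinuousLinearMap.coe_coe]
    rw [map_sub, hLf, hLp, sub_self]
  have horth : (inner ℂ p (f - p) : ℂ) = 0 := by
    have := hp (f - p) hfp
    rw [← inner_conj_symm, this, map_zero]
  have hpyth : ‖f‖ ^ 2 = ‖p‖ ^ 2 + ‖f - p‖ ^ 2 := by
    have := norm_add_sq (𝕜 := ℂ) p (f - p)
    simp only [horth, map_zero, mul_zero, add_zero] at this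
    simpa [add_sub_cancel] using this
  nlinarith [norm_nonneg f, norm_nonneg p, norm_nonneg (f - p)]
end

section
/- Let X be an m×n complex matrix and Y ∈ ℂ^m. Suppose W₁ ∈ ℂ^n is a least square solution of XW = Y (i.e., minimizes ‖XW − Y‖) and W₂ ∈ ℂ^m is a least square solution of X*W₂ = W₁ (i.e., minimizes ‖X*V − W₁‖ over V ∈ ℂ^m). Then X*W₂ is a least square solution of XW = Y and lies in the orthogonal complement of the null space of the map W ↦ XW; hence X*W₂ is the unique minimum-norm least square solution (pseudo-inverse solution) of XW = Y. -/
open Matrix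
noncomputable def toE {k : ℕ} (v : Fin k → ℂ) : EuclideanSpace ℂ (Fin k) :=
  (WithLp.equiv 2 (Fin k → ℂ)).symm v

lemma inner_toE {k : ℕ} (u v : Fin k → ℂ) :
    (inner ℂ (toE u) (toE v) : ℂ) = star u ⬝ᵥ v := by
  simp [toE, PiLp.inner_apply, dotProduct, mul_comm]

lemma inner_mulVec_left {m n : ℕ} (A : Matrix (Fin m) (Fin n) ℂ) (x : Fin n → ℂ) (y : Fin m → ℂ) :
    (inner ℂ (toE (A.mulVec x)) (toE y) : ℂ) = inner ℂ (toE x) (toE (Aᴴ.mulVec y)) := by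
  rw [inner_toE, inner_toE, star_mulVec, ← dotProduct_mulVec]

lemma inner_mulVec_right {m n : ℕ} (A : Matrix (Fin m) (Fin n) ℂ) (x : Fin m → ℂ) (y : Fin n → ℂ) :
    (inner ℂ (toE x) (toE (A.mulVec y)) : ℂ) = inner ℂ (toE (Aᴴ.mulVec x)) (toE y) := by
  rw [inner_toE, inner_toE, dotProduct_mulVec, star_mulVec, conjTranspose_conjTranspose]

lemma toE_sub {k : ℕ} (u v : Fin k → ℂ) : toE (u - v) = toE u - toE v := rfl
lemma toE_smul {k : ℕ} (c : ℂ) (u : Fin k → ℂ) : toE (c • u) = c • toE u := rfl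

lemma normal_eq {m n : ℕ} (A : Matrix (Fin m) (Fin n) ℂ) (b : Fin m → ℂ) (w : Fin n → ℂ)
    (h : ∀ W, ‖toE (A.mulVec w - b)‖ ≤ ‖toE (A.mulVec W - b)‖) :
    Aᴴ.mulVec (A.mulVec w - b) = 0 := by
  set r := A.mulVec w - b with hr
  set g := Aᴴ.mulVec r with hg
  set G := ‖toE g‖ ^ 2 with hG
  set K := ‖toE (A.mulVec g)‖ ^ 2 with hK
  have hK0 : (0:ℝ) ≤ K := by positivity
  have hG0 : (0:ℝ) ≤ G := by positivity
  set t : ℝ := G / (K + 1) with ht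
  have ht0 : 0 ≤ t := by positivity
  have htK : t * (K + 1) = G := by
    rw [ht]; exact div_mul_cancel₀ G (by positivity)
  -- inner product fact
  have hinner : (inner ℂ (toE r) (toE (A.mulVec g)) : ℂ) = (G : ℂ) := by
    rw [inner_mulVec_right, ← hg, inner_self_eq_norm_sq_to_K, hG]
    norm_cast
  have key := h (w - (t:ℂ) • g)
  have hres : A.mulVec (w - (t:ℂ) • g) - b = r - (t:ℂ) • A.mulVec g := by
    rw [hr]; rw [mulVec_sub, mulVec_smul]; abel
  rw [hres] at key
  have hexp : ‖toE (r - (t:ℂ) • A.mulVec g)‖ ^ 2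
      = ‖toE r‖ ^ 2 - 2 * t * G + t ^ 2 * K := by
    rw [toE_sub, toE_smul, @norm_sub_sq ℂ]
    rw [inner_smul_right, hinner]
    have : ‖(t:ℂ) • toE (A.mulVec g)‖ = |t| * ‖toE (A.mulVec g)‖ := by
      rw [norm_smul]; simp
    rw [this]
    rw [abs_of_nonneg ht0]
    have h3 : RCLike.re ((t:ℂ) * (G:ℂ)) = t * G := by
      simp [Complex.ofReal_mul, ← Complex.ofReal_mul]
    rw [h3, hK]
    ring
  have key2 : ‖toE r‖ ^ 2 ≤ ‖toE (r - (t:ℂ) • A.mulVec g)‖ ^ 2 := by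
    apply pow_le_pow_left₀ (norm_nonneg _) key
  rw [hexp] at key2
  have hGz : G = 0 := by nlinarith [sq_nonneg t, sq_nonneg G]
  have : toE g = 0 := by
    have : ‖toE g‖ = 0 := by nlinarith [norm_nonneg (toE g)]
    exact norm_eq_zero.mp this
  exact (WithLp.equiv 2 (Fin n → ℂ)).symm.injective this

lemma toE_zero {k : ℕ} : toE (0 : Fin k → ℂ) = 0 := rfl

lemma toE_eq_zero {k : ℕ} {v : Fin k → ℂ} (h : toE v = 0) : v = 0 :=
  (WithLp.equiv 2 (Fin k → ℂ)).symm.injective h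

theorem stmt11 {m n : ℕ} (X : Matrix (Fin m) (Fin n) ℂ) (Y : Fin m → ℂ)
    (W₁ : Fin n → ℂ) (W₂ : Fin m → ℂ)
    (h₁ : ∀ W : Fin n → ℂ, ‖toE (X.mulVec W₁ - Y)‖ ≤ ‖toE (X.mulVec W - Y)‖)
    (h₂ : ∀ V : Fin m → ℂ, ‖toE (Xᴴ.mulVec W₂ - W₁)‖ ≤ ‖toE (Xᴴ.mulVec V - W₁)‖) :
    (∀ W : Fin n → ℂ,
        ‖toE (X.mulVec (Xᴴ.mulVec W₂) - Y)‖ ≤ ‖toE (X.mulVec W - Y)‖) ∧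
      (∀ V : Fin n → ℂ, X.mulVec V = 0 →
        (inner ℂ (toE (Xᴴ.mulVec W₂)) (toE V) : ℂ) = 0) ∧
      (∀ W : Fin n → ℂ,
        (∀ W' : Fin n → ℂ, ‖toE (X.mulVec W - Y)‖ ≤ ‖toE (X.mulVec W' - Y)‖) →
        ‖toE W‖ ≤ ‖toE (Xᴴ.mulVec W₂)‖ → W = Xᴴ.mulVec W₂) := by
  have hNE₁ : Xᴴ.mulVec (X.mulVec W₁ - Y) = 0 := normal_eq X Y W₁ h₁
  have hNE₂ : Xᴴᴴ.mulVec (Xᴴ.mulVec W₂ - W₁) = 0 := normal_eq Xᴴ W₁ W₂ h₂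
  rw [conjTranspose_conjTranspose] at hNE₂
  set W₀ := Xᴴ.mulVec W₂ with hW₀
  have hXW₀ : X.mulVec W₀ = X.mulVec W₁ := by
    rw [mulVec_sub] at hNE₂
    exact sub_eq_zero.mp hNE₂
  -- part 1
  have hp1 : ∀ W : Fin n → ℂ, ‖toE (X.mulVec W₀ - Y)‖ ≤ ‖toE (X.mulVec W - Y)‖ := by
    intro W; rw [hXW₀]; exact h₁ W
  -- part 2
  have hp2 : ∀ V : Fin n → ℂ, X.mulVec V = 0 →
      (inner ℂ (toE W₀) (toE V) : ℂ) = 0 := by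
    intro V hV
    rw [hW₀, inner_mulVec_left, conjTranspose_conjTranspose, hV, toE_zero, inner_zero_right]
  refine ⟨hp1, hp2, ?_⟩
  -- part 3
  intro W hW hle
  have hNEW : Xᴴ.mulVec (X.mulVec W - Y) = 0 := normal_eq X Y W hW
  have hNEW₀ : Xᴴ.mulVec (X.mulVec W₀ - Y) = 0 := by rw [hXW₀]; exact hNE₁
  set d := W - W₀ with hd
  have hAAd : Xᴴ.mulVec (X.mulVec d) = 0 := by
    have e1 : X.mulVec d = (X.mulVec W - Y) - (X.mulVec W₀ - Y) := by
      rw [hd, mulVec_sub]; abel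
    rw [e1, mulVec_sub, hNEW, hNEW₀, sub_zero]
  have hXd : X.mulVec d = 0 := by
    have h4 : (inner ℂ (toE (X.mulVec d)) (toE (X.mulVec d)) : ℂ) = 0 := by
      rw [inner_mulVec_left, hAAd, toE_zero, inner_zero_right]
    exact toE_eq_zero (inner_self_eq_zero.mp h4)
  have horth : (inner ℂ (toE W₀) (toE d) : ℂ) = 0 := hp2 d hXd
  have hWdecomp : toE W = toE W₀ + toE d := by
    have : W = W₀ + d := by rw [hd]; abel
    rw [this]; rfl
  have hpyth : ‖toE W‖ ^ 2 = ‖toE W₀‖ ^ 2 + ‖toE d‖ ^ 2 := by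
    rw [hWdecomp, @norm_add_sq ℂ, horth]
    simp
  have hle2 : ‖toE W‖ ^ 2 ≤ ‖toE W₀‖ ^ 2 := pow_le_pow_left₀ (norm_nonneg _) hle 2
  have hdz : ‖toE d‖ = 0 := by nlinarith [norm_nonneg (toE d)]
  have : d = 0 := toE_eq_zero (norm_eq_zero.mp hdz)
  rw [hd] at this
  exact sub_eq_zero.mp this
end

section
/- Let X be an m×n complex matrix and Y ∈ ℂ^m. If W̃ ∈ ℂ^m is any least square solution of (XX*)W = Y, then X*W̃ is the unique minimum-norm least square solution of XW = Y. -/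
open Matrix

theorem stmt12 {m n : ℕ} (X : Matrix (Fin m) (Fin n) ℂ) (Y : Fin m → ℂ)
    (Wt : Fin m → ℂ)
    (h : ∀ W : Fin m → ℂ,
      ‖toE ((X * Xᴴ).mulVec Wt - Y)‖ ≤ ‖toE ((X * Xᴴ).mulVec W - Y)‖) :
    (∀ W : Fin n → ℂ,
        ‖toE (X.mulVec (Xᴴ.mulVec Wt) - Y)‖ ≤ ‖toE (X.mulVec W - Y)‖) ∧
      (∀ W : Fin n → ℂ,
        (∀ W' : Fin n → ℂ, ‖toE (X.mulVec W - Y)‖ ≤ ‖toE (X.mulVec W' - Y)‖) →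
        ‖toE (Xᴴ.mulVec Wt)‖ ≤ ‖toE W‖) ∧
      (∀ W : Fin n → ℂ,
        (∀ W' : Fin n → ℂ, ‖toE (X.mulVec W - Y)‖ ≤ ‖toE (X.mulVec W' - Y)‖) →
        ‖toE W‖ ≤ ‖toE (Xᴴ.mulVec Wt)‖ → W = Xᴴ.mulVec Wt) := by
  classical
  set f : EuclideanSpace ℂ (Fin n) →ₗ[ℂ] EuclideanSpace ℂ (Fin m) :=
    Matrix.toEuclideanLin X with hf
  set A : EuclideanSpace ℂ (Fin m) →ₗ[ℂ] EuclideanSpace ℂ (Fin n) :=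
    LinearMap.adjoint f with hA
  have hAX : ∀ v : Fin m → ℂ, toE (Xᴴ.mulVec v) = A (toE v) := by
    intro v
    rw [hA, hf, ← Matrix.toEuclideanLin_conjTranspose_eq_adjoint]
    rfl
  have hfX : ∀ v : Fin n → ℂ, toE (X.mulVec v) = f (toE v) := fun v => rfl
  set y : EuclideanSpace ℂ (Fin m) := toE Y with hy
  set w : EuclideanSpace ℂ (Fin m) := toE Wt with hw
  set a : EuclideanSpace ℂ (Fin n) := A w with ha
  -- translate hypothesis
  have h' : ∀ v : EuclideanSpace ℂ (Fin m), ‖f a - y‖ ≤ ‖f (A v) - y‖ := by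
    intro v
    have := h (WithLp.equiv 2 (Fin m → ℂ) v)
    have e1 : ∀ u : Fin m → ℂ,
        toE ((X * Xᴴ).mulVec u - Y) = f (A (toE u)) - y := by
      intro u
      rw [← Matrix.mulVec_mulVec]
      show toE (X.mulVec (Xᴴ.mulVec u)) - toE Y = f (A (toE u)) - y
      rw [hfX, hAX]
    rw [e1, e1] at this
    exact this
  -- the subspace of values of f ∘ A
  set K : Submodule ℂ (EuclideanSpace ℂ (Fin m)) := LinearMap.range (f ∘ₗ A) with hK
  -- infimum characterization
  have hinf : ‖y - f a‖ = ⨅ w' : K, ‖y - (w' : EuclideanSpace ℂ (Fin m))‖ := by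
    apply le_antisymm
    · apply le_ciInf
      rintro ⟨w', ⟨v, rfl⟩⟩
      simpa [norm_sub_rev] using h' v
    · refine ciInf_le ⟨0, ?_⟩ (⟨f a, ⟨w, rfl⟩⟩ : K)
      rintro r ⟨w', rfl⟩
      exact norm_nonneg _
  have horth : ∀ z ∈ K, inner ℂ (y - f a) z = (0 : ℂ) :=
    (Submodule.norm_eq_iInf_iff_inner_eq_zero K (⟨w, rfl⟩ : f a ∈ K)).1 hinf
  -- normal equation : A (y - f a) = 0
  have hA0 : A (y - f a) = 0 := by
    have h1 := horth (f (A (y - f a))) ⟨y - f a, rfl⟩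
    rw [← LinearMap.adjoint_inner_left, ← hA] at h1
    exact inner_self_eq_zero.1 h1
  have key : ∀ v : EuclideanSpace ℂ (Fin n), (inner ℂ (f a - y) (f v) : ℂ) = 0 := by
    intro v
    have h3 : A (f a - y) = 0 := by
      rw [← neg_sub y (f a), map_neg, hA0, neg_zero]
    have : (inner ℂ (f v) (f a - y) : ℂ) = 0 := by
      rw [← LinearMap.adjoint_inner_right, ← hA, h3, inner_zero_right]
    exact inner_eq_zero_symm.mp this
  -- pythagoras
  have pyth : ∀ u : EuclideanSpace ℂ (Fin n),
      ‖f u - y‖ ^ 2 = ‖f a - y‖ ^ 2 + ‖f u - f a‖ ^ 2 := by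
    intro u
    have horth2 : (inner ℂ (f a - y) (f u - f a) : ℂ) = 0 := by
      have := key (u - a)
      rwa [map_sub] at this
    have := norm_add_sq_eq_norm_sq_add_norm_sq_of_inner_eq_zero _ _ horth2
    have e : f a - y + (f u - f a) = f u - y := by abel
    rw [e] at this
    simpa [pow_two] using this
  have part1 : ∀ u : EuclideanSpace ℂ (Fin n), ‖f a - y‖ ≤ ‖f u - y‖ := by
    intro u
    have hsq : ‖f a - y‖ ^ 2 ≤ ‖f u - y‖ ^ 2 := by
      rw [pyth u]; exact le_add_of_nonneg_right (sq_nonneg _)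
    have := Real.sqrt_le_sqrt hsq
    rwa [Real.sqrt_sq (norm_nonneg _), Real.sqrt_sq (norm_nonneg _)] at this
  -- minimizers coincide with a up to ker f
  have minEq : ∀ W : Fin n → ℂ,
      (∀ W' : Fin n → ℂ, ‖toE (X.mulVec W - Y)‖ ≤ ‖toE (X.mulVec W' - Y)‖) →
      f (toE W) = f a ∧ (inner ℂ a (toE W - a) : ℂ) = 0 := by
    intro W hW
    have hWle : ‖f (toE W) - y‖ ≤ ‖f a - y‖ := by
      have := hW (WithLp.equiv 2 (Fin n → ℂ) a)
      have e2 : ∀ u : Fin n → ℂ, toE (X.mulVec u - Y) = f (toE u) - y := fun u => rfl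
      rw [e2, e2] at this
      exact this
    have hle2 : ‖f a - y‖ ≤ ‖f (toE W) - y‖ := part1 (toE W)
    have heq : ‖f (toE W) - y‖ = ‖f a - y‖ := le_antisymm hWle hle2
    have hp := pyth (toE W)
    rw [heq] at hp
    have hz2 : ‖f (toE W) - f a‖ ^ 2 = 0 := by linarith
    have hz : ‖f (toE W) - f a‖ = 0 := (pow_eq_zero_iff two_ne_zero).mp hz2
    have hfeq : f (toE W) = f a := sub_eq_zero.1 (norm_eq_zero.1 hz)
    refine ⟨hfeq, ?_⟩
    have : (inner ℂ w (f (toE W - a)) : ℂ) = 0 := by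
      rw [map_sub, hfeq, sub_self, inner_zero_right]
    calc (inner ℂ a (toE W - a) : ℂ) = inner ℂ w (f (toE W - a)) := by
          rw [ha, hA, LinearMap.adjoint_inner_left]
      _ = 0 := this
  refine ⟨?_, ?_, ?_⟩
  · intro W
    have e2 : ∀ u : Fin n → ℂ, toE (X.mulVec u - Y) = f (toE u) - y := fun u => rfl
    rw [e2, e2, hAX]
    exact part1 (toE W)
  · intro W hW
    obtain ⟨hfeq, hinner⟩ := minEq W hW
    have hp : ‖toE W‖ ^ 2 = ‖a‖ ^ 2 + ‖toE W - a‖ ^ 2 := by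
      have := norm_add_sq_eq_norm_sq_add_norm_sq_of_inner_eq_zero _ _ hinner
      have e : a + (toE W - a) = toE W := by abel
      rw [e] at this
      simpa [pow_two] using this
    rw [hAX]
    have hsq : ‖a‖ ^ 2 ≤ ‖toE W‖ ^ 2 := by
      rw [hp]; exact le_add_of_nonneg_right (sq_nonneg _)
    have := Real.sqrt_le_sqrt hsq
    rwa [Real.sqrt_sq (norm_nonneg _), Real.sqrt_sq (norm_nonneg _)] at this
  · intro W hW hle
    obtain ⟨hfeq, hinner⟩ := minEq W hW
    have hp : ‖toE W‖ ^ 2 = ‖a‖ ^ 2 + ‖toE W - a‖ ^ 2 := by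
      have := norm_add_sq_eq_norm_sq_add_norm_sq_of_inner_eq_zero _ _ hinner
      have e : a + (toE W - a) = toE W := by abel
      rw [e] at this
      simpa [pow_two] using this
    rw [hAX] at hle
    have hle2 : ‖toE W‖ ^ 2 ≤ ‖a‖ ^ 2 := pow_le_pow_left₀ (norm_nonneg _) hle 2
    have hz2 : ‖toE W - a‖ ^ 2 = 0 := le_antisymm (by linarith) (sq_nonneg _)
    have hz : ‖toE W - a‖ = 0 := (pow_eq_zero_iff two_ne_zero).mp hz2
    have : toE W = a := sub_eq_zero.1 (norm_eq_zero.1 hz)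
    have : toE W = toE (Xᴴ.mulVec Wt) := by rw [this, hAX]
    exact (WithLp.equiv 2 (Fin n → ℂ)).symm.injective this
end

section
/- Let L be a bounded linear operator from Hilbert space 𝓗 to H and d ∈ H. Suppose LL*d ∈ R(LL*LL*). Then d decomposes as d = d₁ + d₀ with d₁ ∈ R(LL*) and d₀ ∈ R(L)^⊥; in particular L*d ∈ R(L*L), so the least square problem for Lf = d is solvable. -/
open ContinuousLinearMap in
theorem stmt14 {𝓗 H : Type*} [NormedAddCommGroup 𝓗] [InnerProductSpace ℂ 𝓗]
    [CompleteSpace 𝓗] [NormedAddCommGroup H] [InnerProductSpace ℂ H] [CompleteSpace H]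
    (L : 𝓗 →L[ℂ] H) (d : H)
    (h : (L.comp (ContinuousLinearMap.adjoint L)) d ∈
      LinearMap.range (((L.comp (ContinuousLinearMap.adjoint L)).comp
        (L.comp (ContinuousLinearMap.adjoint L)) : H →L[ℂ] H) : H →ₗ[ℂ] H)) :
    (∃ d₁ d₀ : H, d₁ ∈ LinearMap.range ((L.comp (ContinuousLinearMap.adjoint L) : H →L[ℂ] H) : H →ₗ[ℂ] H) ∧
        d₀ ∈ (LinearMap.range (L : 𝓗 →ₗ[ℂ] H))ᗮ ∧ d = d₁ + d₀) ∧
      ContinuousLinearMap.adjoint L d ∈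
        LinearMap.range (((ContinuousLinearMap.adjoint L).comp L : 𝓗 →L[ℂ] 𝓗) : 𝓗 →ₗ[ℂ] 𝓗) ∧
      ∃ f : 𝓗, ∀ g : 𝓗, ‖L f - d‖ ≤ ‖L g - d‖ := by
  obtain ⟨w, hw⟩ := h
  set T := L.comp (ContinuousLinearMap.adjoint L) with hT
  have hw' : T (T w) = T d := hw
  set d₁ := T w with hd₁
  set d₀ := d - d₁ with hd₀
  have hTd0 : T d₀ = 0 := by
    rw [hd₀, map_sub, hd₁, hw', sub_self]
  have hLad0 : ContinuousLinearMap.adjoint L d₀ = 0 := by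
    have h1 : (inner ℂ ((ContinuousLinearMap.adjoint L) d₀)
        ((ContinuousLinearMap.adjoint L) d₀) : ℂ) = 0 := by
      rw [ContinuousLinearMap.adjoint_inner_left]
      have : L ((ContinuousLinearMap.adjoint L) d₀) = T d₀ := rfl
      rw [this, hTd0, inner_zero_right]
    exact inner_self_eq_zero.mp h1
  have hd0orth : d₀ ∈ (LinearMap.range (L : 𝓗 →ₗ[ℂ] H))ᗮ := by
    intro y hy
    obtain ⟨x, rfl⟩ := hy
    change inner ℂ (L x) d₀ = 0
    rw [← ContinuousLinearMap.adjoint_inner_right, hLad0, inner_zero_right]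
  have hsum : d = d₁ + d₀ := by simp [hd₀]
  refine ⟨⟨d₁, d₀, ⟨w, rfl⟩, hd0orth, hsum⟩, ?_, ?_⟩
  · refine ⟨ContinuousLinearMap.adjoint L w, ?_⟩
    have : ContinuousLinearMap.adjoint L d = ContinuousLinearMap.adjoint L d₁ := by
      rw [hsum, map_add, hLad0, add_zero]
    rw [this, hd₁]
    rfl
  · refine ⟨ContinuousLinearMap.adjoint L w, fun g => ?_⟩
    have hLf : L (ContinuousLinearMap.adjoint L w) = d₁ := rfl
    have key : ∀ g : 𝓗, ‖L g - d‖ ^ 2 = ‖L g - d₁‖ ^ 2 + ‖d₀‖ ^ 2 := by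
      intro g
      have heq : L g - d = (L g - d₁) + (-d₀) := by rw [hsum]; abel
      have hz : (inner ℂ (L g - d₁) d₀ : ℂ) = 0 := by
        exact hd0orth (L g - d₁)
          (Submodule.sub_mem _ ⟨g, rfl⟩ ⟨ContinuousLinearMap.adjoint L w, rfl⟩)
      have hz' : (inner ℂ (L g - d₁) (-d₀) : ℂ) = 0 := by rw [inner_neg_right, hz, neg_zero]
      rw [heq]
      simp only [pow_two]
      rw [norm_add_sq_eq_norm_sq_add_norm_sq_of_inner_eq_zero _ _ hz', norm_neg]
    have h1 : ‖L (ContinuousLinearMap.adjoint L w) - d‖ ^ 2 = ‖d₀‖ ^ 2 := by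
      rw [key, hLf]; simp
    have h2 : ‖L (ContinuousLinearMap.adjoint L w) - d‖ ^ 2 ≤ ‖L g - d‖ ^ 2 := by
      rw [h1, key g]; exact le_add_of_nonneg_left (by positivity)
    nlinarith [norm_nonneg (L (ContinuousLinearMap.adjoint L w) - d), norm_nonneg (L g - d)]
end
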